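/- arXiv:1810.12161 — 2 statements merged into one kernel-verified Lean document; each statement's English description precedes it below -/
import Mathlib

section
/- Fix integers n ≥ 1, p ≥ 0, K ≥ 2, vectors x_i ∈ ℝ^p for i = 1, …, n with the convention x_{i0} = 1 (so x̃_i = (1, x_{i1}, …, x_{ip}) ∈ ℝ^{p+1}), and current parameters w_k^{[s]} = (w_{k0}^{[s]}, …, w_{kp}^{[s]}) ∈ ℝ^{p+1} for k = 1, …, K-1. Set C_i^m = 1 + ∑_{k=1}^{K-1} exp(∑_{j=0}^{p} x_{ij} w_{kj}^{[s]}) and π_k(x_i; w^{[s]}) = exp(∑_{j=0}^{p} x_{ij} w_{kj}^{[s]}) / C_i^m. Then for every choice of parameters w_k = (w_{k0}, …, w_{kp}) ∈ ℝ^{p+1}, k = 1, …, K-1, one has I_1(w) := -∑_{i=1}^{n} log(1 + ∑_{k=1}^{K-1} exp(∑_{j=0}^{p} x_{ij} w_{kj})) ≥ G_1(w | w^{[s]}) := ∑_{i=1}^{n} [ -∑_{k=1}^{K-1} (π_k(x_i; w^{[s]})/(p+1)) ∑_{j=0}^{p} exp((p+1) x_{ij}(w_{kj} - w_{kj}^{[s]}))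 - log C_i^m + 1 - 1/C_i^m ], and equality holds when w_k = w_k^{[s]} for all k = 1, …, K-1. That is, G_1(· | w^{[s]}) is a minorizing function of I_1 at w^{[s]}. -/
open Finset

lemma jensen_exp {m : ℕ} (a : Fin (m + 1) → ℝ) :
    Real.exp (∑ j, (1 / (m + 1 : ℝ)) * a j) ≤ ∑ j, (1 / (m + 1 : ℝ)) * Real.exp (a j) := by
  have h := convexOn_exp.map_sum_le (t := Finset.univ) (w := fun _ : Fin (m+1) => 1 / (m + 1 : ℝ))
    (p := a) (fun i _ => by positivity)
    (by simp [Finset.sum_const]; field_simp) (fun i _ => trivial)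
  simpa [smul_eq_mul] using h

/-- The function `G₁(· | w^{[s]})` is a minorizing function of
`I₁(w) = -∑ᵢ log(1 + ∑ₖ exp(∑ⱼ x_{ij} w_{kj}))` at the current parameters
`w^{[s]}`: the inequality `I₁(w) ≥ G₁(w | w^{[s]})` holds for all `w`, with
equality at `w = w^{[s]}`.  Here `C_i^m = 1 + ∑ₖ exp(∑ⱼ x_{ij} w_{kj}^{[s]})`
and `π_k(x_i; w^{[s]}) = exp(∑ⱼ x_{ij} w_{kj}^{[s]}) / C_i^m`, with the
convention `x_{i0} = 1`. -/
theorem minorization_I1 (n p K : ℕ) (hn : 1 ≤ n) (hK : 2 ≤ K)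
    (x : Fin n → Fin (p + 1) → ℝ) (hx : ∀ i, x i 0 = 1)
    (ws : Fin (K - 1) → Fin (p + 1) → ℝ)
    (C : Fin n → ℝ)
    (hC : ∀ i, C i = 1 + ∑ k, Real.exp (∑ j, x i j * ws k j))
    (gate : Fin n → Fin (K - 1) → ℝ)
    (hgate : ∀ i k, gate i k = Real.exp (∑ j, x i j * ws k j) / C i) :
    (∀ w : Fin (K - 1) → Fin (p + 1) → ℝ,
      (-∑ i, Real.log (1 + ∑ k, Real.exp (∑ j, x i j * w k j))) ≥
        ∑ i, (-(∑ k, (gate i k / (p + 1 : ℝ)) *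
              ∑ j, Real.exp ((p + 1 : ℝ) * x i j * (w k j - ws k j)))
            - Real.log (C i) + 1 - 1 / C i)) ∧
    ((-∑ i, Real.log (1 + ∑ k, Real.exp (∑ j, x i j * ws k j))) =
        ∑ i, (-(∑ k, (gate i k / (p + 1 : ℝ)) *
              ∑ j, Real.exp ((p + 1 : ℝ) * x i j * (ws k j - ws k j)))
            - Real.log (C i) + 1 - 1 / C i)) := by
  have hCpos : ∀ i, 0 < C i := by
    intro i
    rw [hC i]
    have : (0:ℝ) ≤ ∑ k : Fin (K-1), Real.exp (∑ j, x i j * ws k j) :=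
      Finset.sum_nonneg fun k _ => (Real.exp_pos _).le
    linarith
  have hgate_nonneg : ∀ i k, 0 ≤ gate i k := by
    intro i k; rw [hgate]; exact div_nonneg (Real.exp_pos _).le (hCpos i).le
  constructor
  · intro w
    rw [ge_iff_le, ← Finset.sum_neg_distrib]
    apply Finset.sum_le_sum
    intro i _
    have hSpos : (0:ℝ) < 1 + ∑ k, Real.exp (∑ j, x i j * w k j) := by
      have : (0:ℝ) ≤ ∑ k : Fin (K-1), Real.exp (∑ j, x i j * w k j) :=
        Finset.sum_nonneg fun k _ => (Real.exp_pos _).le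
      linarith
    -- tangent bound for log
    have hlog : Real.log (1 + ∑ k, Real.exp (∑ j, x i j * w k j)) ≤
        Real.log (C i) + (1 + ∑ k, Real.exp (∑ j, x i j * w k j)) / C i - 1 := by
      have h1 : Real.log ((1 + ∑ k, Real.exp (∑ j, x i j * w k j)) / C i) ≤
          (1 + ∑ k, Real.exp (∑ j, x i j * w k j)) / C i - 1 :=
        Real.log_le_sub_one_of_pos (div_pos hSpos (hCpos i))
      rw [Real.log_div (by positivity) (hCpos i).ne'] at h1
      linarith
    -- per-k bound
    have hk : ∀ k : Fin (K-1), Real.exp (∑ j, x i j * w k j) / C i ≤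
        (gate i k / (p + 1 : ℝ)) * ∑ j, Real.exp ((p + 1 : ℝ) * x i j * (w k j - ws k j)) := by
      intro k
      have hsplit : Real.exp (∑ j, x i j * w k j) / C i =
          gate i k * Real.exp (∑ j, x i j * (w k j - ws k j)) := by
        rw [hgate, div_mul_eq_mul_div, ← Real.exp_add]
        congr 2
        rw [← Finset.sum_add_distrib]
        exact Finset.sum_congr rfl fun j _ => by ring
      rw [hsplit]
      have hJ : Real.exp (∑ j, x i j * (w k j - ws k j)) ≤
          ∑ j, (1 / (p + 1 : ℝ)) * Real.exp ((p + 1 : ℝ) * x i j * (w k j - ws k j)) := by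
        have := jensen_exp (m := p) (a := fun j => (p + 1 : ℝ) * x i j * (w k j - ws k j))
        have heq : (∑ j, (1 / (p + 1 : ℝ)) * ((p + 1 : ℝ) * x i j * (w k j - ws k j))) =
            ∑ j, x i j * (w k j - ws k j) := by
          apply Finset.sum_congr rfl
          intro j _
          have : (p + 1 : ℝ) ≠ 0 := by positivity
          field_simp
        rw [heq] at this
        exact this
      calc gate i k * Real.exp (∑ j, x i j * (w k j - ws k j))
          ≤ gate i k * ∑ j, (1 / (p + 1 : ℝ)) * Real.exp ((p + 1 : ℝ) * x i j * (w k j - ws k j)) :=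
            mul_le_mul_of_nonneg_left hJ (hgate_nonneg i k)
        _ = (gate i k / (p + 1 : ℝ)) * ∑ j, Real.exp ((p + 1 : ℝ) * x i j * (w k j - ws k j)) := by
            rw [Finset.mul_sum, Finset.mul_sum]
            apply Finset.sum_congr rfl
            intro j _; ring
    have hsum : (∑ k, Real.exp (∑ j, x i j * w k j)) / C i ≤
        ∑ k, (gate i k / (p + 1 : ℝ)) * ∑ j, Real.exp ((p + 1 : ℝ) * x i j * (w k j - ws k j)) := by
      rw [Finset.sum_div]
      exact Finset.sum_le_sum fun k _ => hk k
    have hdiv : (1 + ∑ k, Real.exp (∑ j, x i j * w k j)) / C i =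
        1 / C i + (∑ k, Real.exp (∑ j, x i j * w k j)) / C i := by
      rw [add_div]
    linarith [hlog, hsum]
  · rw [← Finset.sum_neg_distrib]
    apply Finset.sum_congr rfl
    intro i _
    rw [← hC i]
    have h1 : ∀ k : Fin (K-1), (gate i k / (p + 1 : ℝ)) *
        ∑ j, Real.exp ((p + 1 : ℝ) * x i j * (ws k j - ws k j)) = gate i k := by
      intro k
      simp only [sub_self, mul_zero, Real.exp_zero]
      rw [Finset.sum_const, Finset.card_univ, Fintype.card_fin]
      have hne : (p + 1 : ℝ) ≠ 0 := by positivity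
      push_cast
      field_simp
      rw [nsmul_eq_mul, mul_one, Nat.cast_add, Nat.cast_one]
    have h2 : (∑ k, gate i k) = 1 - 1 / C i := by
      have h3 : (∑ k, gate i k) = (∑ k, Real.exp (∑ j, x i j * ws k j)) / C i := by
        rw [Finset.sum_div]; exact Finset.sum_congr rfl fun k _ => hgate i k
      rw [h3]
      have hCe : (∑ k, Real.exp (∑ j, x i j * ws k j)) = C i - 1 := by rw [hC]; ring
      rw [hCe, sub_div, div_self (hCpos i).ne']
    rw [Finset.sum_congr rfl (fun k _ => h1 k), h2]
    ring
end

section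
/- Fix integers p ≥ 0 and K ≥ 2, a vector x ∈ ℝ^p with the convention x_0 = 1 (so x̃ = (1, x_1, …, x_p) ∈ ℝ^{p+1}), and current parameters w_k^{[s]} ∈ ℝ^{p+1} for k = 1, …, K-1. Set C^m = 1 + ∑_{k=1}^{K-1} exp(∑_{j=0}^{p} x_j w_{kj}^{[s]}) and π_k = exp(∑_{j=0}^{p} x_j w_{kj}^{[s]}) / C^m. Then for every w_k ∈ ℝ^{p+1}, k = 1, …, K-1, one has -log(1 + ∑_{k=1}^{K-1} exp(∑_{j=0}^{p} x_j w_{kj})) ≥ -log C^m + 1 - 1/C^m - ∑_{k=1}^{K-1} π_k · exp(∑_{j=0}^{p} x_j w_{kj} - ∑_{j=0}^{p} x_j w_{kj}^{[s]}), with equality when w_k = w_k^{[s]} for all k. -/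
open Finset in
/-- Tangent-line minorization of the negative log-partition term of a single
observation: with `C^m = 1 + ∑ₖ exp(∑ⱼ x_j w_{kj}^{[s]})` and
`π_k = exp(∑ⱼ x_j w_{kj}^{[s]}) / C^m` (convention `x₀ = 1`), for every `w`,
`-log(1 + ∑ₖ exp(∑ⱼ x_j w_{kj})) ≥ -log C^m + 1 - 1/C^m
  - ∑ₖ π_k exp(∑ⱼ x_j w_{kj} - ∑ⱼ x_j w_{kj}^{[s]})`,
with equality when `w = w^{[s]}`. -/
theorem minorization_single_obs (p K : ℕ) (hK : 2 ≤ K)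
    (x : Fin (p + 1) → ℝ) (hx : x 0 = 1)
    (ws : Fin (K - 1) → Fin (p + 1) → ℝ)
    (C : ℝ) (hC : C = 1 + ∑ k, Real.exp (∑ j, x j * ws k j))
    (gate : Fin (K - 1) → ℝ)
    (hgate : ∀ k, gate k = Real.exp (∑ j, x j * ws k j) / C) :
    (∀ w : Fin (K - 1) → Fin (p + 1) → ℝ,
      (-Real.log (1 + ∑ k, Real.exp (∑ j, x j * w k j))) ≥
        -Real.log C + 1 - 1 / C -
          ∑ k, gate k * Real.exp ((∑ j, x j * w k j) - ∑ j, x j * ws k j)) ∧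
    ((-Real.log (1 + ∑ k, Real.exp (∑ j, x j * ws k j))) =
        -Real.log C + 1 - 1 / C -
          ∑ k, gate k * Real.exp ((∑ j, x j * ws k j) - ∑ j, x j * ws k j)) := by
  have hsum : (0:ℝ) ≤ ∑ k, Real.exp (∑ j, x j * ws k j) :=
    Finset.sum_nonneg fun k _ => (Real.exp_pos _).le
  have hCpos : 0 < C := by rw [hC]; linarith
  have key : ∀ w : Fin (K - 1) → Fin (p + 1) → ℝ,
      (-Real.log (1 + ∑ k, Real.exp (∑ j, x j * w k j))) ≥
        -Real.log C + 1 - 1 / C -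
          ∑ k, gate k * Real.exp ((∑ j, x j * w k j) - ∑ j, x j * ws k j) := by
    intro w
    set u : ℝ := ∑ k, Real.exp (∑ j, x j * w k j) with hu
    have hupos : (0:ℝ) ≤ u := Finset.sum_nonneg fun k _ => (Real.exp_pos _).le
    have h1u : (0:ℝ) < 1 + u := by linarith
    have hgs : ∑ k, gate k * Real.exp ((∑ j, x j * w k j) - ∑ j, x j * ws k j)
        = u / C := by
      rw [hu, Finset.sum_div]
      refine Finset.sum_congr rfl fun k _ => ?_
      rw [hgate k, Real.exp_sub]
      field_simp
    rw [hgs]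
    have hlog : Real.log ((1 + u) / C) ≤ (1 + u) / C - 1 :=
      Real.log_le_sub_one_of_pos (by positivity)
    rw [Real.log_div (ne_of_gt h1u) (ne_of_gt hCpos)] at hlog
    have : (1 + u) / C = 1 / C + u / C := by ring
    rw [this] at hlog
    linarith
  refine ⟨key, ?_⟩
  have h := key ws
  have hgs : ∑ k, gate k * Real.exp ((∑ j, x j * ws k j) - ∑ j, x j * ws k j)
      = (C - 1) / C := by
    simp only [sub_self, Real.exp_zero, mul_one]
    rw [Finset.sum_congr rfl fun k _ => hgate k, ← Finset.sum_div, hC]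
    ring_nf
  rw [hgs, ← hC]
  have : -Real.log C + 1 - 1 / C - (C - 1) / C = -Real.log C := by
    field_simp
    ring
  rw [this]
end
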